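/- Let A = {α₁,...,αₙ} and B = {β₁,...,βₙ} be disjoint finite subsets of ℝ, each of size n, that strictly interlace (α₁ < β₁ < α₂ < β₂ < ... or β₁ < α₁ < β₂ < α₂ < ...). Write P_B = P_A − Σ_{α∈A} x_α · P_{A∖{α}}, where P_S(λ) = Π_{s∈S}(λ − s) and the coefficients x_α are uniquely determined. Then all the x_α have the same sign. -/

import Mathlib

open Polynomial

/-- Proposition: if `A = {α i}` and `B = {β i}` strictly interlace, then the
coefficients `x i` in the expansion
`P_B = P_A - ∑ i, x i • P_{A \ {α i}}` all have the same sign. -/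
theorem stmt_11 {n : ℕ} (α β : Fin n → ℝ)
    (hα : StrictMono α) (hβ : StrictMono β)
    (hint : ((∀ i, α i < β i) ∧ ∀ i j : Fin n, i < j → β i < α j) ∨
            ((∀ i, β i < α i) ∧ ∀ i j : Fin n, i < j → α i < β j))
    (x : Fin n → ℝ)
    (hx : (∏ i, (X - C (β i))) =
      (∏ i, (X - C (α i))) -
        ∑ i, C (x i) * ∏ j ∈ Finset.univ.erase i, (X - C (α j))) :
    (∀ i, 0 < x i) ∨ (∀ i, x i < 0) := by
  set D : Fin n → ℝ := fun i => ∏ j ∈ Finset.univ.erase i, (α i - α j) with hD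
  have key : ∀ i, (∏ j, (α i - β j)) = -(x i * D i) := by
    intro i
    have h := congrArg (Polynomial.eval (α i)) hx
    simp only [eval_prod, eval_sub, eval_X, eval_C, eval_finset_sum, eval_mul] at h
    rw [show (∏ j, (α i - α j)) = 0 from
        Finset.prod_eq_zero (Finset.mem_univ i) (by simp)] at h
    rw [Finset.sum_eq_single i (fun k _ hk => by
        rw [Finset.prod_eq_zero (Finset.mem_erase.mpr ⟨hk.symm, Finset.mem_univ i⟩)
          (by simp : α i - α i = 0)]
        ring) (by simp)] at h
    rw [h]; ring
  have hDne : ∀ i, D i ≠ 0 := by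
    intro i
    refine Finset.prod_ne_zero_iff.mpr fun j hj => sub_ne_zero.mpr ?_
    exact fun h => (Finset.mem_erase.mp hj).1 (hα.injective h).symm
  -- the products ∏_{j≠i}(αᵢ - βⱼ) and D i have the same sign, in either case
  have hQD : ∀ i, 0 < (∏ j ∈ Finset.univ.erase i, (α i - β j)) * D i := by
    intro i
    rw [hD, ← Finset.prod_mul_distrib]
    refine Finset.prod_pos fun j hj => ?_
    have hji : j ≠ i := (Finset.mem_erase.mp hj).1
    rcases lt_or_gt_of_ne hji with hlt | hgt
    · have hαα : α j < α i := hα hlt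
      have hβα : β j < α i := by
        rcases hint with ⟨h1, h2⟩ | ⟨h1, h2⟩
        · exact h2 j i hlt
        · exact lt_trans (h1 j) hαα
      exact mul_pos (by linarith) (by linarith)
    · have hαα : α i < α j := hα hgt
      have hαβ : α i < β j := by
        rcases hint with ⟨h1, h2⟩ | ⟨h1, h2⟩
        · exact lt_trans hαα (h1 j)
        · exact h2 i j hgt
      have h1 : α i - β j < 0 := by linarith
      have h2 : α i - α j < 0 := by linarith
      exact mul_pos_of_neg_of_neg h1 h2
  have split : ∀ i, (∏ j, (α i - β j)) =
      (α i - β i) * ∏ j ∈ Finset.univ.erase i, (α i - β j) := by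
    intro i
    rw [← Finset.prod_erase_mul Finset.univ _ (Finset.mem_univ i)]; ring
  rcases hint with ⟨h1, h2⟩ | ⟨h1, h2⟩
  · left
    intro i
    have hk := key i
    rw [split i] at hk
    have hD2 : 0 < D i ^ 2 :=
      lt_of_le_of_ne (sq_nonneg (D i)) (Ne.symm (pow_ne_zero 2 (hDne i)))
    have : x i * D i ^ 2 = -(α i - β i) * ((∏ j ∈ Finset.univ.erase i, (α i - β j)) * D i) := by
      have := congrArg (· * D i) hk
      nlinarith [this]
    have hpos : 0 < x i * D i ^ 2 := by
      rw [this]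
      exact mul_pos (by linarith [h1 i]) (hQD i)
    nlinarith [hpos, hD2]
  · right
    intro i
    have hk := key i
    rw [split i] at hk
    have hD2 : 0 < D i ^ 2 :=
      lt_of_le_of_ne (sq_nonneg (D i)) (Ne.symm (pow_ne_zero 2 (hDne i)))
    have : x i * D i ^ 2 = -(α i - β i) * ((∏ j ∈ Finset.univ.erase i, (α i - β j)) * D i) := by
      nlinarith [congrArg (· * D i) hk]
    have hneg : x i * D i ^ 2 < 0 := by
      rw [this]
      exact mul_neg_of_neg_of_pos (by linarith [h1 i]) (hQD i)
    nlinarith [hneg, hD2]
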